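/- Let λ₀, λ₁, λ∞ > 0. Define H_0 = −2( λ₀²·log(2λ₀) + λ₁²·log(2λ₁) + λ∞²·log(2λ∞) ) + 3(λ₀²+λ₁²+λ∞²), H_1 = (1/12)·log(λ₀λ₁λ∞), and H_g = −(B_{2g}/(2g(2g−2)))·( (2λ₀)^{2−2g} + (2λ₁)^{2−2g} + (2λ∞)^{2−2g} ) for g ≥ 2. Then for each j ∈ {0,1,∞} and every integer n ≥ 1, Σ_{k=1}^{n} (2/(2k)!) · ∂_{λ_j}^{2k} H_{n−k} = −4·log(2λ_j) if n = 1, and = (1/(n−1))·(2λ_j)^{2−2n} if n ≥ 2. (That is, the formal series H = Σ_{g≥0} ℏ^{2g−2} H_g satisfies X_j H = −2log(2λ_j) − log(2λ_j+ℏ) − log(2λ_j−ℏ) for each j, order by order in ℏ, using log(2λ_j+ℏ)+log(2λ_j−ℏ) = 2log(2λ_j) − Σ_{m≥1}(1/m)(ℏ/(2λ_j))^{2m}.) -/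

import Mathlib

open Finset

/-- sum over range (2m) splits into even/odd pairs -/
lemma sum_range_two_mul {M : Type*} [AddCommMonoid M] (f : ℕ → M) (m : ℕ) :
    ∑ i ∈ range (2 * m), f i = ∑ g ∈ range m, (f (2 * g) + f (2 * g + 1)) := by
  induction m with
  | zero => simp
  | succ m ih =>
      rw [show 2 * (m + 1) = (2 * m + 1) + 1 by ring, sum_range_succ, sum_range_succ,
        ih, sum_range_succ, add_assoc]

lemma prod_desc (p M : ℕ) :
    ∏ i ∈ range M, (-((p : ℚ) + 1) - i) = (-1) ^ M * ((p + M).factorial / p.factorial) := by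
  induction M with
  | zero =>
      have hp : (p.factorial : ℚ) ≠ 0 := Nat.cast_ne_zero.mpr (Nat.factorial_ne_zero p)
      simp [div_self hp]
  | succ M ih =>
      rw [prod_range_succ, ih]
      have h : ((p + (M + 1)).factorial : ℚ) = ((p + M : ℕ) + 1) * (p + M).factorial := by
        rw [show p + (M + 1) = (p + M) + 1 by ring, Nat.factorial_succ]
        push_cast; ring
      rw [h]
      have hp : (p.factorial : ℚ) ≠ 0 := Nat.cast_ne_zero.mpr (Nat.factorial_ne_zero p)
      field_simp
      push_cast
      ring

lemma eval_bernoulliP (N : ℕ) (x : ℚ) :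
    (Polynomial.bernoulli N).eval x
      = ∑ i ∈ range (N + 1), bernoulli i * (N.choose i) * x ^ (N - i) := by
  rw [Polynomial.bernoulli, Polynomial.eval_finset_sum]
  simp [Polynomial.eval_monomial]

lemma eval_deriv_bernoulliP (N : ℕ) (x : ℚ) :
    ∑ i ∈ range (N + 1), bernoulli i * (N.choose i) * (((N - i : ℕ) : ℚ) * x ^ (N - i - 1))
      = (N : ℚ) * (Polynomial.bernoulli (N - 1)).eval x := by
  have h := Polynomial.derivative_bernoulli N
  have h2 : (Polynomial.derivative (Polynomial.bernoulli N)).eval x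
      = (N : ℚ) * (Polynomial.bernoulli (N - 1)).eval x := by rw [h]; simp
  rw [← h2, Polynomial.bernoulli, Polynomial.derivative_sum, Polynomial.eval_finset_sum]
  apply sum_congr rfl
  intro i _
  rw [Polynomial.derivative_monomial, Polynomial.eval_monomial]
  ring

lemma bern_eval_two (p : ℕ) (hp : 1 ≤ p) :
    (Polynomial.bernoulli (p + 1)).eval 2 = bernoulli (p + 1) + (p + 1 : ℚ) := by
  have h := Polynomial.bernoulli_succ_eval 2 p
  rw [show ((2 : ℕ) : ℚ) = 2 by norm_num] at h
  rw [h]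
  have : ∑ k ∈ range 2, (k : ℚ) ^ p = 1 := by
    rw [sum_range_succ, sum_range_one]
    simp [zero_pow (by omega : p ≠ 0)]
  rw [this]; ring

lemma bern_odd_zero (g : ℕ) (hg : 1 ≤ g) : bernoulli (2 * g + 1) = 0 := by
  rw [bernoulli_eq_bernoulli'_of_ne_one (by omega)]
  exact bernoulli'_eq_zero_of_odd ⟨g, by ring⟩ (by omega)

/-- The main Bernoulli identity, binomial form. -/
lemma iden (m : ℕ) :
    ∑ g ∈ Icc 1 (m + 1), (2 * (g : ℚ) - 1) * bernoulli (2 * g)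
        * ((2 * (m + 2)).choose (2 * g)) * 2 ^ (2 * (m + 2 - g))
      = 2 ^ (2 * (m + 2)) - 2 * ((m : ℚ) + 2) * (2 * ((m : ℚ) + 2) - 1) := by
  set N := 2 * (m + 2) with hN
  set f : ℕ → ℚ := fun i => ((i : ℚ) - 1) * bernoulli i * (N.choose i) * 2 ^ (N - i) with hf
  -- Step 1 : total sum
  have step1 : ∑ i ∈ range (N + 1), f i
      = ((N : ℚ) - 1) * (Polynomial.bernoulli N).eval 2
        - 2 * ((N : ℚ) * (Polynomial.bernoulli (N - 1)).eval 2) := by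
    rw [eval_bernoulliP, ← eval_deriv_bernoulliP, mul_sum, mul_sum, ← sum_sub_distrib]
    apply sum_congr rfl
    intro i hi
    rw [mem_range] at hi
    have hiN : i ≤ N := by omega
    have hcast : ((i : ℚ) - 1) = ((N : ℚ) - 1) - ((N - i : ℕ) : ℚ) := by
      have : ((N - i : ℕ) : ℚ) = (N : ℚ) - i := by
        push_cast [Nat.cast_sub hiN]; ring
      rw [this]; ring
    rw [hf]
    simp only []
    rw [hcast]
    rcases eq_or_lt_of_le hiN with h | h
    · subst h; simp
    · obtain ⟨j, hj⟩ : ∃ j, N - i = j + 1 := ⟨N - i - 1, by omega⟩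
      rw [hj, show j + 1 - 1 = j from rfl, pow_succ]
      ring
  -- Step 2 : the evals
  have e1 : (Polynomial.bernoulli N).eval 2 = bernoulli N + (N : ℚ) := by
    have := bern_eval_two (2 * m + 3) (by omega)
    rw [show N = (2 * m + 3) + 1 by omega] at *
    rw [this]; push_cast; ring
  have e2 : (Polynomial.bernoulli (N - 1)).eval 2 = ((N : ℚ) - 1) := by
    have h := bern_eval_two (2 * m + 2) (by omega)
    rw [show N - 1 = (2 * m + 2) + 1 by omega, h,
      show 2 * m + 2 + 1 = 2 * (m + 1) + 1 by ring, bern_odd_zero (m + 1) (by omega)]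
    push_cast [hN]; ring
  -- Step 3 : even-odd split
  have step3 : ∑ i ∈ range (N + 1), f i
      = f 0 + (∑ g ∈ Icc 1 (m + 1), f (2 * g)) + f N := by
    rw [show N + 1 = 2 * (m + 2) + 1 by omega, sum_range_succ, sum_range_two_mul]
    have hodd : ∀ g ∈ range (m + 2), f (2 * g) + f (2 * g + 1) = f (2 * g) := by
      intro g _
      rcases Nat.eq_zero_or_pos g with h | h
      · subst h; simp [hf]
      · rw [hf]; simp only []
        rw [bern_odd_zero g h]; ring
    rw [sum_congr rfl hodd, sum_range_succ', show 2 * (m + 2) = N by omega]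
    have : ∑ i ∈ range (m + 1), f (2 * (i + 1)) = ∑ g ∈ Icc 1 (m + 1), f (2 * g) := by
      rw [show Icc 1 (m + 1) = Ico 1 (m + 2) by rw [← Finset.Ico_add_one_right_eq_Icc]; rfl, sum_Ico_eq_sum_range]
      apply sum_congr (by norm_num)
      intro i _
      congr 1
      omega
    rw [this]; ring
  -- assemble
  have hsum : ∑ g ∈ Icc 1 (m + 1), f (2 * g)
      = ∑ i ∈ range (N + 1), f i - f 0 - f N := by rw [step3]; ring
  have hfin : ∑ g ∈ Icc 1 (m + 1), f (2 * g)
      = ∑ g ∈ Icc 1 (m + 1), (2 * (g : ℚ) - 1) * bernoulli (2 * g)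
          * ((2 * (m + 2)).choose (2 * g)) * 2 ^ (2 * (m + 2 - g)) := by
    apply sum_congr rfl
    intro g hg
    rw [mem_Icc] at hg
    rw [hf]
    simp only []
    rw [show N - 2 * g = 2 * (m + 2 - g) by omega]
    push_cast
    ring
  rw [← hfin, hsum, step1, e1, e2]
  have hf0 : f 0 = -2 ^ N := by simp [hf]
  have hfN : f N = ((N : ℚ) - 1) * bernoulli N := by
    rw [hf]; simp [Nat.sub_self]
  rw [hf0, hfN, hN]
  push_cast
  ring

lemma prod_neg_one (M : ℕ) :
    ∏ i ∈ range M, ((-1 : ℚ) - (i : ℕ)) = (-1) ^ M * (M.factorial : ℚ) := by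
  have h := prod_desc 0 M
  rw [show ∏ i ∈ range M, ((-1 : ℚ) - (i : ℕ)) = ∏ i ∈ range M, (-((0 : ℕ) + 1 : ℚ) - i) from
    prod_congr rfl fun i _ => by norm_num, h]
  simp

lemma bernoulli_two' : bernoulli 2 = 1 / 6 := by
  rw [bernoulli_eq_bernoulli'_of_ne_one (by norm_num)]; exact bernoulli'_two

/-- The scalar coefficient identity in ℚ. -/
lemma SCQ (m : ℕ) :
    2 / ((2 * (m + 2)).factorial : ℚ) * (-4 * ∏ i ∈ range (2 * m + 1), ((-1 : ℚ) - (i : ℕ)))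
    + 2 / ((2 * (m + 1)).factorial : ℚ)
        * (1 / 12 * ∏ i ∈ range (2 * m + 1), ((-1 : ℚ) - (i : ℕ)))
    + ∑ g ∈ Icc 2 (m + 1), 2 / ((2 * (m + 2 - g)).factorial : ℚ) *
        (-(bernoulli (2 * g) / (2 * (g : ℚ) * (2 * (g : ℚ) - 2))) * (2 : ℚ) ^ (2 - 2 * (g : ℤ))
          * ∏ i ∈ range (2 * (m + 2 - g)), (((2 - 2 * (g : ℤ) : ℤ) : ℚ) - (i : ℕ)))
    = 1 / ((m : ℚ) + 1) * (2 : ℚ) ^ (2 - 2 * ((m : ℤ) + 2)) := by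
  have hfacne : ∀ M : ℕ, ((M.factorial : ℚ)) ≠ 0 :=
    fun M => Nat.cast_ne_zero.mpr (Nat.factorial_ne_zero M)
  set c : ℚ := -(8 * ((2 * m + 1).factorial : ℚ))
      / (2 ^ (2 * m + 4) * ((2 * (m + 2)).factorial : ℚ)) with hc
  set s : ℕ → ℚ := fun g => (2 * (g : ℚ) - 1) * bernoulli (2 * g)
      * ((2 * (m + 2)).choose (2 * g)) * 2 ^ (2 * (m + 2 - g)) with hs
  -- termwise: each g-term equals c * s g
  have hterm : ∀ g ∈ Icc 2 (m + 1), 2 / ((2 * (m + 2 - g)).factorial : ℚ) *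
        (-(bernoulli (2 * g) / (2 * (g : ℚ) * (2 * (g : ℚ) - 2))) * (2 : ℚ) ^ (2 - 2 * (g : ℤ))
          * ∏ i ∈ range (2 * (m + 2 - g)), (((2 - 2 * (g : ℤ) : ℤ) : ℚ) - (i : ℕ)))
      = c * s g := by
    intro g hg
    rw [mem_Icc] at hg
    obtain ⟨j, rfl⟩ : ∃ j, g = j + 2 := ⟨g - 2, by omega⟩
    have hj : j ≤ m - 1 := by omega
    have hmj : m + 2 - (j + 2) = m - j := by omega
    rw [hmj]
    -- the product
    have hprod : ∏ i ∈ range (2 * (m - j)), (((2 - 2 * ((j + 2 : ℕ) : ℤ) : ℤ) : ℚ) - (i : ℕ))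
        = ((2 * m + 1).factorial : ℚ) / ((2 * j + 1).factorial : ℚ) := by
      have h1 : ∀ i ∈ range (2 * (m - j)),
          (((2 - 2 * ((j + 2 : ℕ) : ℤ) : ℤ) : ℚ) - (i : ℕ))
            = (-(((2 * j + 1 : ℕ) : ℚ) + 1) - i) := by
        intro i _; push_cast; ring
      rw [prod_congr rfl h1, prod_desc]
      rw [show 2 * j + 1 + 2 * (m - j) = 2 * m + 1 from by omega]
      rw [Even.neg_one_pow ⟨m - j, by ring⟩, one_mul]
    rw [hprod]
    -- the zpow
    have hzpow : (2 : ℚ) ^ (2 - 2 * ((j + 2 : ℕ) : ℤ)) = ((2 : ℚ) ^ (2 * j + 2))⁻¹ := by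
      rw [show (2 - 2 * ((j + 2 : ℕ) : ℤ)) = -((2 * j + 2 : ℕ) : ℤ) from by push_cast; ring,
        zpow_neg, zpow_natCast]
    rw [hzpow, hs, hc]
    simp only []
    -- the choose
    rw [Nat.cast_choose ℚ (show 2 * (j + 2) ≤ 2 * (m + 2) by omega),
      show 2 * (m + 2) - 2 * (j + 2) = 2 * (m - j) from by omega]
    rw [show m + 2 - (j + 2) = m - j from by omega]
    -- factorial expansion of (2*(j+2))!
    have hfac : ((2 * (j + 2)).factorial : ℚ)
        = (2 * j + 4) * ((2 * j + 3) * ((2 * j + 2) * ((2 * j + 1).factorial : ℚ))) := by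
      rw [show 2 * (j + 2) = (2 * j + 3) + 1 from by omega, Nat.factorial_succ,
        show 2 * j + 3 = (2 * j + 2) + 1 from by omega, Nat.factorial_succ,
        show 2 * j + 2 = (2 * j + 1) + 1 from by omega, Nat.factorial_succ]
      push_cast; ring
    rw [hfac]
    -- powers of two
    have hpow2 : (2 : ℚ) ^ (2 * m + 4) = 2 ^ (2 * (m - j)) * 2 ^ (2 * j + 4) := by
      rw [← pow_add]; congr 1; omega
    rw [hpow2]
    have e1 : ((2 * j + 4 : ℚ)) ≠ 0 := by positivity
    have e2 : ((2 * j + 3 : ℚ)) ≠ 0 := by positivity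
    have e3 : ((2 * j + 2 : ℚ)) ≠ 0 := by positivity
    have e4 : (2 : ℚ) ^ (2 * (m - j)) ≠ 0 := by positivity
    have e5 : (2 : ℚ) ^ (2 * j + 4) ≠ 0 := by positivity
    have e6 : (2 : ℚ) ^ (2 * j + 2) ≠ 0 := by positivity
    have hcg1 : (2 * ((j : ℚ) + 2) * (2 * ((j : ℚ) + 2) - 2)) ≠ 0 := by
      have : (2 * ((j : ℚ) + 2) * (2 * ((j : ℚ) + 2) - 2)) = (2 * j + 4) * (2 * j + 2) := by ring
      rw [this]; positivity
    have e7 : ((j : ℚ) + 1) ≠ 0 := by positivity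
    push_cast
    field_simp
    rw [show (j : ℚ) + 2 - 1 = j + 1 by ring]
    field_simp
    ring
  rw [sum_congr rfl hterm, ← mul_sum]
  -- reduce the sum over Icc 2 (m+1) to iden
  have hins : Icc 1 (m + 1) = insert 1 (Icc 2 (m + 1)) := by
    ext x; simp [mem_Icc, mem_insert]; omega
  have hsum2 : ∑ g ∈ Icc 2 (m + 1), s g = (∑ g ∈ Icc 1 (m + 1), s g) - s 1 := by
    rw [hins, sum_insert (by simp)]; ring
  have hiden : ∑ g ∈ Icc 1 (m + 1), s g
      = 2 ^ (2 * (m + 2)) - 2 * ((m : ℚ) + 2) * (2 * ((m : ℚ) + 2) - 1) := iden m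
  have hs1 : s 1 = (1 / 6) * ((m : ℚ) + 2) * (2 * m + 3) * 2 ^ (2 * m + 2) := by
    rw [hs]
    simp only []
    rw [show (2 * 1 : ℕ) = 2 from rfl, bernoulli_two',
      show (2 * (m + 2)).choose 2 = (m + 2) * (2 * m + 3) from by
        rw [Nat.choose_two_right, show 2 * (m + 2) - 1 = 2 * m + 3 from by omega,
          show 2 * (m + 2) * (2 * m + 3) = ((m + 2) * (2 * m + 3)) * 2 from by ring]
        exact Nat.mul_div_cancel _ (by norm_num),
      show 2 * (m + 2 - 1) = 2 * m + 2 from by omega]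
    push_cast; ring
  rw [hsum2, hiden, hs1, prod_neg_one]
  rw [Odd.neg_one_pow ⟨m, by ring⟩]
  -- final explicit computation
  have hzr : (2 : ℚ) ^ (2 - 2 * ((m : ℤ) + 2)) = ((2 : ℚ) ^ (2 * m + 2))⁻¹ := by
    rw [show (2 - 2 * ((m : ℤ) + 2)) = -((2 * m + 2 : ℕ) : ℤ) from by push_cast; ring,
      zpow_neg, zpow_natCast]
  rw [hzr, hc]
  have hfac1 : ((2 * (m + 2)).factorial : ℚ)
      = (2 * m + 4) * ((2 * m + 3) * ((2 * m + 2) * ((2 * m + 1).factorial : ℚ))) := by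
    rw [show 2 * (m + 2) = (2 * m + 3) + 1 from by omega, Nat.factorial_succ,
      show 2 * m + 3 = (2 * m + 2) + 1 from by omega, Nat.factorial_succ,
      show 2 * m + 2 = (2 * m + 1) + 1 from by omega, Nat.factorial_succ]
    push_cast; ring
  have hfac2 : ((2 * (m + 1)).factorial : ℚ) = (2 * m + 2) * ((2 * m + 1).factorial : ℚ) := by
    rw [show 2 * (m + 1) = (2 * m + 1) + 1 from by omega, Nat.factorial_succ]
    push_cast; ring
  rw [hfac1, hfac2]
  have hpowa : (2 : ℚ) ^ (2 * m + 4) = 2 ^ (2 * m + 2) * 4 := by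
    rw [show 2 * m + 4 = (2 * m + 2) + 2 from by omega, pow_add]; norm_num
  have hpowb : (2 : ℚ) ^ (2 * (m + 2)) = 2 ^ (2 * m + 2) * 4 := by
    rw [show 2 * (m + 2) = (2 * m + 2) + 2 from by omega, pow_add]; norm_num
  rw [hpowa, hpowb]
  have e1 : ((2 * m + 4 : ℚ)) ≠ 0 := by positivity
  have e2 : ((2 * m + 3 : ℚ)) ≠ 0 := by positivity
  have e3 : ((2 * m + 2 : ℚ)) ≠ 0 := by positivity
  have e4 : (2 : ℚ) ^ (2 * m + 2) ≠ 0 := by positivity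
  have e5 : ((m : ℚ) + 1) ≠ 0 := by positivity
  field_simp
  ring

open Real in
/-- derivatives only depend on values near a positive point -/
lemma deriv_congr_pos {f g : ℝ → ℝ} (h : ∀ x : ℝ, 0 < x → f x = g x) {x : ℝ} (hx : 0 < x) :
    deriv f x = deriv g x := by
  apply Filter.EventuallyEq.deriv_eq
  filter_upwards [Ioi_mem_nhds hx] with y hy
  exact h y hy

lemma iter_zpow (c D : ℝ) (e : ℤ) (K : ℝ → ℝ) (h : ∀ y : ℝ, 0 < y → K y = c * y ^ e + D) :
    ∀ M : ℕ, ∀ x : ℝ, 0 < x →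
      deriv^[M + 1] K x
        = c * (∏ i ∈ range (M + 1), ((e : ℝ) - (i : ℕ))) * x ^ (e - ((M + 1 : ℕ) : ℤ)) := by
  intro M
  induction M with
  | zero =>
      intro x hx
      rw [show (0 : ℕ) + 1 = 1 from rfl, Function.iterate_one, deriv_congr_pos h hx]
      have hd : HasDerivAt (fun y : ℝ => c * y ^ e + D) (c * ((e : ℝ) * x ^ (e - 1))) x :=
        ((hasDerivAt_zpow e x (Or.inl hx.ne')).const_mul c).add_const D
      rw [hd.deriv, prod_range_one]
      push_cast
      try ring
  | succ M ih =>
      intro x hx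
      rw [Function.iterate_succ_apply',
        deriv_congr_pos (f := deriv^[M + 1] K)
          (g := fun y : ℝ => (c * ∏ i ∈ range (M + 1), ((e : ℝ) - (i : ℕ)))
            * y ^ (e - ((M + 1 : ℕ) : ℤ)))
          (fun y hy => by rw [ih y hy]) hx]
      have hd : HasDerivAt
          (fun y : ℝ => (c * ∏ i ∈ range (M + 1), ((e : ℝ) - (i : ℕ)))
            * y ^ (e - ((M + 1 : ℕ) : ℤ)))
          ((c * ∏ i ∈ range (M + 1), ((e : ℝ) - (i : ℕ)))
            * (((e - ((M + 1 : ℕ) : ℤ) : ℤ) : ℝ) * x ^ ((e - ((M + 1 : ℕ) : ℤ)) - 1))) x :=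
        (hasDerivAt_zpow _ x (Or.inl hx.ne')).const_mul _
      rw [hd.deriv,
        show (e - ((M + 1 : ℕ) : ℤ)) - 1 = e - ((M + 1 + 1 : ℕ) : ℤ) from by push_cast; ring]
      conv_rhs => rw [prod_range_succ]
      push_cast
      try ring

lemma iter_log (c D : ℝ) (K : ℝ → ℝ) (h : ∀ y : ℝ, 0 < y → K y = c * Real.log y + D) :
    ∀ M : ℕ, ∀ x : ℝ, 0 < x →
      deriv^[M + 1] K x
        = c * (∏ i ∈ range M, ((-1 : ℝ) - (i : ℕ))) * x ^ (-1 - (M : ℤ)) := by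
  have hder : ∀ y : ℝ, 0 < y → deriv K y = c * y ^ (-1 : ℤ) + 0 := by
    intro y hy
    rw [deriv_congr_pos h hy]
    have hd : HasDerivAt (fun t : ℝ => c * Real.log t + D) (c * y⁻¹) y :=
      ((Real.hasDerivAt_log hy.ne').const_mul c).add_const D
    rw [hd.deriv, zpow_neg_one]
    ring
  intro M
  cases M with
  | zero =>
      intro x hx
      rw [show (0 : ℕ) + 1 = 1 from rfl, Function.iterate_one, hder x hx]
      norm_num
  | succ M =>
      intro x hx
      rw [Function.iterate_succ_apply, iter_zpow c 0 (-1) (deriv K) hder M x hx]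
      have hpr : ∏ i ∈ range (M + 1), (((-1 : ℤ) : ℝ) - (i : ℕ))
          = ∏ i ∈ range (M + 1), ((-1 : ℝ) - (i : ℕ)) :=
        prod_congr rfl (fun i _ => by norm_num)
      rw [hpr]

lemma iter_H0a (D : ℝ) (K : ℝ → ℝ)
    (h : ∀ y : ℝ, 0 < y → K y = -2 * y ^ 2 * Real.log (2 * y) + 3 * y ^ 2 + D) :
    ∀ x : ℝ, 0 < x → deriv K x = -4 * x * Real.log (2 * x) + 4 * x := by
  intro x hx
  rw [deriv_congr_pos h hx]
  have hlog : HasDerivAt (fun y : ℝ => Real.log (2 * y)) (x⁻¹) x := by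
    have h1 : HasDerivAt (fun y : ℝ => 2 * y) 2 x := by
      simpa using (hasDerivAt_id x).const_mul (2 : ℝ)
    have h2 := (Real.hasDerivAt_log (by positivity : (2 * x) ≠ 0)).comp x h1
    refine h2.congr_deriv ?_
    ring
  have hsq : HasDerivAt (fun y : ℝ => y ^ 2) (2 * x) x := by
    simpa using hasDerivAt_pow 2 x
  have hmain : HasDerivAt (fun y : ℝ => -2 * y ^ 2 * Real.log (2 * y) + 3 * y ^ 2 + D)
      ((-2 * (2 * x)) * Real.log (2 * x) + (-2 * x ^ 2) * x⁻¹ + 3 * (2 * x)) x := by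
    have hA : HasDerivAt (fun y : ℝ => -2 * y ^ 2) (-2 * (2 * x)) x := hsq.const_mul (-2)
    have hB := hA.mul hlog
    have hC : HasDerivAt (fun y : ℝ => 3 * y ^ 2) (3 * (2 * x)) x := hsq.const_mul 3
    exact (hB.add hC).add_const D
  rw [hmain.deriv]
  field_simp
  ring

lemma iter_H0b (D : ℝ) (K : ℝ → ℝ)
    (h : ∀ y : ℝ, 0 < y → K y = -2 * y ^ 2 * Real.log (2 * y) + 3 * y ^ 2 + D) :
    ∀ x : ℝ, 0 < x → deriv^[2] K x = -4 * Real.log (2 * x) := by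
  intro x hx
  have h2 : deriv^[2] K x = deriv (deriv K) x := by
    rw [show (2 : ℕ) = 1 + 1 from rfl, Function.iterate_succ_apply, Function.iterate_one]
  rw [h2, deriv_congr_pos (g := fun y : ℝ => -4 * y * Real.log (2 * y) + 4 * y)
    (iter_H0a D K h) hx]
  have hlog : HasDerivAt (fun y : ℝ => Real.log (2 * y)) (x⁻¹) x := by
    have h1 : HasDerivAt (fun y : ℝ => 2 * y) 2 x := by
      simpa using (hasDerivAt_id x).const_mul (2 : ℝ)
    have h2 := (Real.hasDerivAt_log (by positivity : (2 * x) ≠ 0)).comp x h1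
    refine h2.congr_deriv ?_
    ring
  have hid : HasDerivAt (fun y : ℝ => -4 * y) (-4) x := by
    simpa using (hasDerivAt_id x).const_mul (-4 : ℝ)
  have hmain : HasDerivAt (fun y : ℝ => -4 * y * Real.log (2 * y) + 4 * y)
      ((-4) * Real.log (2 * x) + (-4 * x) * x⁻¹ + 4) x := by
    have hB := hid.mul hlog
    have hC : HasDerivAt (fun y : ℝ => 4 * y) 4 x := by
      simpa using (hasDerivAt_id x).const_mul (4 : ℝ)
    exact hB.add hC
  rw [hmain.deriv]
  field_simp
  ring

lemma iter_H0c (D : ℝ) (K : ℝ → ℝ)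
    (h : ∀ y : ℝ, 0 < y → K y = -2 * y ^ 2 * Real.log (2 * y) + 3 * y ^ 2 + D) :
    ∀ M : ℕ, ∀ x : ℝ, 0 < x →
      deriv^[M + 3] K x
        = -4 * (∏ i ∈ range M, ((-1 : ℝ) - (i : ℕ))) * x ^ (-1 - (M : ℤ)) := by
  intro M x hx
  rw [show M + 3 = (M + 1) + 2 from by omega, Function.iterate_add_apply]
  exact iter_log (-4) (-4 * Real.log 2) (deriv^[2] K)
    (fun y hy => by
      rw [iter_H0b D K h y hy, Real.log_mul (by norm_num) hy.ne']
      ring) M x hx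

/-- the scalar identity, cast to ℝ -/
lemma SCR (m : ℕ) :
    2 / ((2 * (m + 2)).factorial : ℝ) * (-4 * ∏ i ∈ range (2 * m + 1), ((-1 : ℝ) - (i : ℕ)))
    + 2 / ((2 * (m + 1)).factorial : ℝ)
        * (1 / 12 * ∏ i ∈ range (2 * m + 1), ((-1 : ℝ) - (i : ℕ)))
    + ∑ g ∈ Icc 2 (m + 1), 2 / ((2 * (m + 2 - g)).factorial : ℝ) *
        (-((bernoulli (2 * g) : ℝ) / (2 * (g : ℝ) * (2 * (g : ℝ) - 2)))
            * (2 : ℝ) ^ (2 - 2 * (g : ℤ))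
          * ∏ i ∈ range (2 * (m + 2 - g)), (((2 - 2 * (g : ℤ) : ℤ) : ℝ) - (i : ℕ)))
    = 1 / ((m : ℝ) + 1) * (2 : ℝ) ^ (2 - 2 * ((m : ℤ) + 2)) := by
  have h := congrArg (fun q : ℚ => (q : ℝ)) (SCQ m)
  push_cast at h
  convert h using 2
  apply sum_congr rfl
  intro g _
  norm_cast

lemma key (K : ℕ → ℝ → ℝ) (C0 C1 : ℝ) (D : ℕ → ℝ)
    (h0 : ∀ y : ℝ, 0 < y → K 0 y = -2 * y ^ 2 * Real.log (2 * y) + 3 * y ^ 2 + C0)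
    (h1 : ∀ y : ℝ, 0 < y → K 1 y = 1 / 12 * Real.log y + C1)
    (hg : ∀ g : ℕ, 2 ≤ g → ∀ y : ℝ, 0 < y →
      K g y = -((bernoulli (2 * g) : ℝ) / (2 * (g : ℝ) * (2 * (g : ℝ) - 2)))
        * (2 * y) ^ (2 - 2 * (g : ℤ)) + D g)
    (n : ℕ) (hn : 1 ≤ n) (a : ℝ) (ha : 0 < a) :
    ∑ k ∈ Icc 1 n, 2 / (Nat.factorial (2 * k) : ℝ) * iteratedDeriv (2 * k) (K (n - k)) a
      = if n = 1 then -4 * Real.log (2 * a)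
        else 1 / ((n : ℝ) - 1) * (2 * a) ^ (2 - 2 * (n : ℤ)) := by
  rcases eq_or_lt_of_le hn with h1' | h2'
  · -- n = 1
    subst h1'
    rw [if_pos rfl, Finset.Icc_self, Finset.sum_singleton,
      show (1 : ℕ) - 1 = 0 from rfl, show 2 * 1 = 2 from rfl,
      iteratedDeriv_eq_iterate, iter_H0b C0 (K 0) h0 a ha]
    norm_num [Nat.factorial]
  · -- n ≥ 2
    obtain ⟨m, rfl⟩ : ∃ m, n = m + 2 := ⟨n - 2, by omega⟩
    rw [if_neg (by omega)]
    have e1 : Icc 1 (m + 2) = insert (m + 2) (insert (m + 1) (Icc 1 m)) := by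
      ext x; simp only [mem_Icc, mem_insert]; omega
    rw [e1, sum_insert (by simp only [mem_Icc, mem_insert]; omega),
      sum_insert (by simp only [mem_Icc, mem_insert]; omega)]
    set A : ℝ := a ^ (2 - 2 * ((m + 2 : ℕ) : ℤ)) with hA
    -- term k = m+2
    have hT1 : 2 / (Nat.factorial (2 * (m + 2)) : ℝ)
          * iteratedDeriv (2 * (m + 2)) (K (m + 2 - (m + 2))) a
        = 2 / ((2 * (m + 2)).factorial : ℝ)
            * (-4 * ∏ i ∈ range (2 * m + 1), ((-1 : ℝ) - (i : ℕ))) * A := by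
      rw [Nat.sub_self, iteratedDeriv_eq_iterate,
        show 2 * (m + 2) = (2 * m + 1) + 3 from by omega,
        iter_H0c C0 (K 0) h0 (2 * m + 1) a ha, hA,
        show (-1 - ((2 * m + 1 : ℕ) : ℤ)) = 2 - 2 * ((m + 2 : ℕ) : ℤ) from by omega]
      ring
    -- term k = m+1
    have hT2 : 2 / (Nat.factorial (2 * (m + 1)) : ℝ)
          * iteratedDeriv (2 * (m + 1)) (K (m + 2 - (m + 1))) a
        = 2 / ((2 * (m + 1)).factorial : ℝ)
            * (1 / 12 * ∏ i ∈ range (2 * m + 1), ((-1 : ℝ) - (i : ℕ))) * A := by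
      rw [show m + 2 - (m + 1) = 1 from by omega, iteratedDeriv_eq_iterate,
        show 2 * (m + 1) = (2 * m + 1) + 1 from by omega,
        iter_log (1 / 12) C1 (K 1) h1 (2 * m + 1) a ha, hA,
        show (-1 - ((2 * m + 1 : ℕ) : ℤ)) = 2 - 2 * ((m + 2 : ℕ) : ℤ) from by omega]
      ring
    -- the remaining sum, reindexed by g = m+2-k
    have hre : (∑ k ∈ Icc 1 m,
          2 / (Nat.factorial (2 * k) : ℝ) * iteratedDeriv (2 * k) (K (m + 2 - k)) a)
        = ∑ g ∈ Icc 2 (m + 1),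
            2 / (Nat.factorial (2 * (m + 2 - g)) : ℝ)
              * iteratedDeriv (2 * (m + 2 - g)) (K g) a := by
      apply sum_nbij' (fun k => m + 2 - k) (fun g => m + 2 - g)
      · intro k hk; simp only [mem_Icc] at hk ⊢; omega
      · intro g hg'; simp only [mem_Icc] at hg' ⊢; omega
      · intro k hk; simp only [mem_Icc] at hk; omega
      · intro g hg'; simp only [mem_Icc] at hg'; omega
      · intro k hk
        simp only [mem_Icc] at hk
        rw [show m + 2 - (m + 2 - k) = k from by omega]
    have hterm : ∀ g ∈ Icc 2 (m + 1),
        2 / (Nat.factorial (2 * (m + 2 - g)) : ℝ) * iteratedDeriv (2 * (m + 2 - g)) (K g) a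
          = 2 / ((2 * (m + 2 - g)).factorial : ℝ) *
              (-((bernoulli (2 * g) : ℝ) / (2 * (g : ℝ) * (2 * (g : ℝ) - 2)))
                  * (2 : ℝ) ^ (2 - 2 * (g : ℤ))
                * ∏ i ∈ range (2 * (m + 2 - g)), (((2 - 2 * (g : ℤ) : ℤ) : ℝ) - (i : ℕ))) * A := by
      intro g hg'
      simp only [mem_Icc] at hg'
      have hyp : ∀ y : ℝ, 0 < y → K g y
          = (-((bernoulli (2 * g) : ℝ) / (2 * (g : ℝ) * (2 * (g : ℝ) - 2)))
              * (2 : ℝ) ^ (2 - 2 * (g : ℤ))) * y ^ (2 - 2 * (g : ℤ)) + D g := by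
        intro y hy
        rw [hg g (by omega) y hy, mul_zpow]
        ring
      rw [iteratedDeriv_eq_iterate,
        show 2 * (m + 2 - g) = (2 * (m + 2 - g) - 1) + 1 from by omega,
        iter_zpow _ (D g) (2 - 2 * (g : ℤ)) (K g) hyp (2 * (m + 2 - g) - 1) a ha,
        show (2 * (m + 2 - g) - 1) + 1 = 2 * (m + 2 - g) from by omega, hA,
        show (2 - 2 * (g : ℤ)) - ((2 * (m + 2 - g) : ℕ) : ℤ) = 2 - 2 * ((m + 2 : ℕ) : ℤ)
          from by omega]
      ring
    rw [hre, sum_congr rfl hterm, hT1, hT2, ← sum_mul]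
    have hfin := SCR m
    have h2 : (2 : ℝ) ^ (2 - 2 * ((m : ℤ) + 2)) = (2 : ℝ) ^ (2 - 2 * ((m + 2 : ℕ) : ℤ)) := by
      norm_cast
    have h3 : ((m : ℝ) + 1) = ((m + 2 : ℕ) : ℝ) - 1 := by push_cast; ring
    rw [h2, h3] at hfin
    calc 2 / ((2 * (m + 2)).factorial : ℝ)
            * (-4 * ∏ i ∈ range (2 * m + 1), ((-1 : ℝ) - (i : ℕ))) * A
        + (2 / ((2 * (m + 1)).factorial : ℝ)
            * (1 / 12 * ∏ i ∈ range (2 * m + 1), ((-1 : ℝ) - (i : ℕ))) * A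
        + (∑ g ∈ Icc 2 (m + 1), 2 / ((2 * (m + 2 - g)).factorial : ℝ) *
              (-((bernoulli (2 * g) : ℝ) / (2 * (g : ℝ) * (2 * (g : ℝ) - 2)))
                  * (2 : ℝ) ^ (2 - 2 * (g : ℤ))
                * ∏ i ∈ range (2 * (m + 2 - g)), (((2 - 2 * (g : ℤ) : ℤ) : ℝ) - (i : ℕ)))) * A)
        = (2 / ((2 * (m + 2)).factorial : ℝ)
            * (-4 * ∏ i ∈ range (2 * m + 1), ((-1 : ℝ) - (i : ℕ)))
          + 2 / ((2 * (m + 1)).factorial : ℝ)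
              * (1 / 12 * ∏ i ∈ range (2 * m + 1), ((-1 : ℝ) - (i : ℕ)))
          + ∑ g ∈ Icc 2 (m + 1), 2 / ((2 * (m + 2 - g)).factorial : ℝ) *
              (-((bernoulli (2 * g) : ℝ) / (2 * (g : ℝ) * (2 * (g : ℝ) - 2)))
                  * (2 : ℝ) ^ (2 - 2 * (g : ℤ))
                * ∏ i ∈ range (2 * (m + 2 - g)), (((2 - 2 * (g : ℤ) : ℤ) : ℝ) - (i : ℕ)))) * A := by
          ring
      _ = (1 / (((m + 2 : ℕ) : ℝ) - 1) * (2 : ℝ) ^ (2 - 2 * ((m + 2 : ℕ) : ℤ))) * A := by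
          rw [hfin]
      _ = 1 / (((m + 2 : ℕ) : ℝ) - 1) * (2 * a) ^ (2 - 2 * ((m + 2 : ℕ) : ℤ)) := by
          rw [mul_zpow, hA]; ring

/-- The formal series `H = Σ_{g≥0} ℏ^{2g−2} H_g(λ₀,λ₁,λ∞)` with
`H_0 = −2(λ₀²log(2λ₀)+λ₁²log(2λ₁)+λ∞²log(2λ∞)) + 3(λ₀²+λ₁²+λ∞²)`,
`H_1 = (1/12)log(λ₀λ₁λ∞)`,
`H_g = −(B_{2g}/(2g(2g−2)))((2λ₀)^{2−2g}+(2λ₁)^{2−2g}+(2λ∞)^{2−2g})` (g ≥ 2)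
satisfies `X_j H = −2log(2λ_j) − log(2λ_j+ℏ) − log(2λ_j−ℏ)` for each `j`,
order by order in `ℏ`. -/
theorem stmt17 (H : ℕ → ℝ → ℝ → ℝ → ℝ)
    (hH0 : ∀ a b c : ℝ, 0 < a → 0 < b → 0 < c →
      H 0 a b c = -2 * (a ^ 2 * Real.log (2 * a) + b ^ 2 * Real.log (2 * b)
          + c ^ 2 * Real.log (2 * c)) + 3 * (a ^ 2 + b ^ 2 + c ^ 2))
    (hH1 : ∀ a b c : ℝ, 0 < a → 0 < b → 0 < c →
      H 1 a b c = 1 / 12 * Real.log (a * b * c))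
    (hHg : ∀ g : ℕ, 2 ≤ g → ∀ a b c : ℝ, 0 < a → 0 < b → 0 < c →
      H g a b c = -((bernoulli (2 * g) : ℝ) / (2 * (g : ℝ) * (2 * (g : ℝ) - 2)))
        * ((2 * a) ^ (2 - 2 * (g : ℤ)) + (2 * b) ^ (2 - 2 * (g : ℤ))
            + (2 * c) ^ (2 - 2 * (g : ℤ))))
    (n : ℕ) (hn : 1 ≤ n) (a b c : ℝ) (ha : 0 < a) (hb : 0 < b) (hc : 0 < c) :
    (∑ k ∈ Finset.Icc 1 n, 2 / (Nat.factorial (2 * k) : ℝ)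
          * iteratedDeriv (2 * k) (fun y => H (n - k) y b c) a
        = if n = 1 then -4 * Real.log (2 * a)
          else 1 / ((n : ℝ) - 1) * (2 * a) ^ (2 - 2 * (n : ℤ)))
    ∧ (∑ k ∈ Finset.Icc 1 n, 2 / (Nat.factorial (2 * k) : ℝ)
          * iteratedDeriv (2 * k) (fun y => H (n - k) a y c) b
        = if n = 1 then -4 * Real.log (2 * b)
          else 1 / ((n : ℝ) - 1) * (2 * b) ^ (2 - 2 * (n : ℤ)))
    ∧ (∑ k ∈ Finset.Icc 1 n, 2 / (Nat.factorial (2 * k) : ℝ)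
          * iteratedDeriv (2 * k) (fun y => H (n - k) a b y) c
        = if n = 1 then -4 * Real.log (2 * c)
          else 1 / ((n : ℝ) - 1) * (2 * c) ^ (2 - 2 * (n : ℤ))) := by
  refine ⟨?_, ?_, ?_⟩
  · exact key (fun g y => H g y b c)
      (-2 * (b ^ 2 * Real.log (2 * b) + c ^ 2 * Real.log (2 * c)) + 3 * (b ^ 2 + c ^ 2))
      (1 / 12 * (Real.log b + Real.log c))
      (fun g => -((bernoulli (2 * g) : ℝ) / (2 * (g : ℝ) * (2 * (g : ℝ) - 2)))
        * ((2 * b) ^ (2 - 2 * (g : ℤ)) + (2 * c) ^ (2 - 2 * (g : ℤ))))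
      (fun y hy => by show H 0 y b c = _; rw [hH0 y b c hy hb hc]; ring)
      (fun y hy => by
        show H 1 y b c = _
        rw [hH1 y b c hy hb hc, Real.log_mul (mul_ne_zero hy.ne' hb.ne') hc.ne',
          Real.log_mul hy.ne' hb.ne']
        ring)
      (fun g hg2 y hy => by show H g y b c = _; rw [hHg g hg2 y b c hy hb hc]; ring)
      n hn a ha
  · exact key (fun g y => H g a y c)
      (-2 * (a ^ 2 * Real.log (2 * a) + c ^ 2 * Real.log (2 * c)) + 3 * (a ^ 2 + c ^ 2))
      (1 / 12 * (Real.log a + Real.log c))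
      (fun g => -((bernoulli (2 * g) : ℝ) / (2 * (g : ℝ) * (2 * (g : ℝ) - 2)))
        * ((2 * a) ^ (2 - 2 * (g : ℤ)) + (2 * c) ^ (2 - 2 * (g : ℤ))))
      (fun y hy => by show H 0 a y c = _; rw [hH0 a y c ha hy hc]; ring)
      (fun y hy => by
        show H 1 a y c = _
        rw [hH1 a y c ha hy hc, Real.log_mul (mul_ne_zero ha.ne' hy.ne') hc.ne',
          Real.log_mul ha.ne' hy.ne']
        ring)
      (fun g hg2 y hy => by show H g a y c = _; rw [hHg g hg2 a y c ha hy hc]; ring)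
      n hn b hb
  · exact key (fun g y => H g a b y)
      (-2 * (a ^ 2 * Real.log (2 * a) + b ^ 2 * Real.log (2 * b)) + 3 * (a ^ 2 + b ^ 2))
      (1 / 12 * (Real.log a + Real.log b))
      (fun g => -((bernoulli (2 * g) : ℝ) / (2 * (g : ℝ) * (2 * (g : ℝ) - 2)))
        * ((2 * a) ^ (2 - 2 * (g : ℤ)) + (2 * b) ^ (2 - 2 * (g : ℤ))))
      (fun y hy => by show H 0 a b y = _; rw [hH0 a b y ha hb hy]; ring)
      (fun y hy => by
        show H 1 a b y = _
        rw [hH1 a b y ha hb hy, Real.log_mul (mul_ne_zero ha.ne' hb.ne') hy.ne',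
          Real.log_mul ha.ne' hb.ne']
        ring)
      (fun g hg2 y hy => by show H g a b y = _; rw [hHg g hg2 a b y ha hb hy]; ring)
      n hn c hc
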